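/- Let K be a positive commutative monoid with the transportation property. Let m ≥ 1, let A_0, A_1, ..., A_m be nonempty finite types, and for each i ∈ {1,...,m} let R_i : A_{i-1} × A_i → K be a K-relation. Suppose the collection is pairwise consistent: for every pair of indices i < j there exists W : (∏_{k=0}^m A_k) → K whose marginal on coordinates (i-1,i) equals R_i and whose marginal on coordinates (j-1,j) equals R_j. Then the collection is globally consistent: there exists W : (∏_{k=0}^m A_k) → K whose marginal on coordinates (i-1,i) equals R_i for every i ∈ {1,...,m}. -/

import Mathlib

/-- A positive commutative monoid `K` has the transportation property if every
balanced instance of the transportation problem over `K` has a solution. -/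
def TransportationProperty (K : Type*) [AddCommMonoid K] : Prop :=
  ∀ (m n : ℕ), 0 < m → 0 < n → ∀ (b : Fin m → K) (c : Fin n → K),
    ∑ i, b i = ∑ j, c j →
    ∃ d : Fin m → Fin n → K,
      (∀ i, ∑ j, d i j = b i) ∧ (∀ j, ∑ i, d i j = c j)

section Aux
variable {K : Type*} [AddCommMonoid K]


lemma sum_collapse_left {α β : Type*} [Fintype α] [Fintype β] [DecidableEq β]
    (g : α → K) (p : α → Prop) [DecidablePred p] (c : α → β) :
    ∑ x : β, ∑ t, (if c t = x ∧ p t then g t else 0) = ∑ t, if p t then g t else 0 := by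
  rw [Finset.sum_comm]
  refine Finset.sum_congr rfl fun t _ => ?_
  simp [ite_and]

lemma sum_collapse_right {α β : Type*} [Fintype α] [Fintype β] [DecidableEq β]
    (g : α → K) (p : α → Prop) [DecidablePred p] (c : α → β) :
    ∑ x : β, ∑ t, (if p t ∧ c t = x then g t else 0) = ∑ t, if p t then g t else 0 := by
  rw [Finset.sum_comm]
  refine Finset.sum_congr rfl fun t _ => ?_
  simp [ite_and]


lemma base_lemma {K : Type*} [AddCommMonoid K]
    {m : ℕ} (hm : 1 ≤ m)
    (A : Fin (m + 1) → Type) [∀ k, Fintype (A k)] [∀ k, DecidableEq (A k)]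
    [∀ k, Nonempty (A k)] (a : (k : Fin (m + 1)) → A k)
    (R : (i : Fin m) → A i.castSucc × A i.succ → K) :
    ∃ W : ((k : Fin (m + 1)) → A k) → K,
      (∀ i : Fin m, (i : ℕ) < 1 → ∀ (x : A i.castSucc) (y : A i.succ),
        (∑ t : (k : Fin (m + 1)) → A k,
          if t i.castSucc = x ∧ t i.succ = y then W t else 0) = R i (x, y)) ∧
      (∀ t, W t ≠ 0 → ∀ k : Fin (m + 1), 1 < (k : ℕ) → t k = a k) := by
  classical
  set i0 : Fin m := ⟨0, hm⟩ with hi0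
  set c0 : Fin (m + 1) := i0.castSucc with hc0
  set c1 : Fin (m + 1) := i0.succ with hc1
  have hv0 : (c0 : ℕ) = 0 := rfl
  have hv1 : (c1 : ℕ) = 1 := rfl
  have hne01 : c0 ≠ c1 := by
    intro h; rw [Fin.ext_iff, hv0, hv1] at h; omega
  refine ⟨fun t => if ∀ k : Fin (m + 1), 1 < (k : ℕ) → t k = a k
      then R i0 (t c0, t c1) else 0, ?_, ?_⟩
  · intro i hi x y
    have hii : i = i0 := by
      have h0 : (i0 : ℕ) = 0 := rfl
      exact Fin.ext (by omega)
    subst hii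
    show (∑ t : (k : Fin (m + 1)) → A k,
        if t c0 = x ∧ t c1 = y then
          (if ∀ k : Fin (m + 1), 1 < (k : ℕ) → t k = a k then R i0 (t c0, t c1) else 0)
        else 0) = R i0 (x, y)
    set tstar := Function.update (Function.update a c0 x) c1 y with htstar
    have h1 : tstar c1 = y := Function.update_self _ _ _
    have h0 : tstar c0 = x := by
      rw [htstar, Function.update_of_ne hne01, Function.update_self]
    have hsup : ∀ k : Fin (m + 1), 1 < (k : ℕ) → tstar k = a k := by
      intro k hk
      have hk0 : k ≠ c0 := by intro h; rw [Fin.ext_iff, hv0] at h; omega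
      have hk1 : k ≠ c1 := by intro h; rw [Fin.ext_iff, hv1] at h; omega
      rw [htstar, Function.update_of_ne hk1, Function.update_of_ne hk0]
    rw [Finset.sum_eq_single_of_mem tstar (Finset.mem_univ _)]
    · rw [if_pos ⟨h0, h1⟩, if_pos hsup, h0, h1]
    · intro t _ htne
      by_cases hc : t c0 = x ∧ t c1 = y
      · rw [if_pos hc]
        by_cases hs : ∀ k : Fin (m + 1), 1 < (k : ℕ) → t k = a k
        · exfalso
          apply htne
          funext k
          by_cases hk0 : k = c0
          · subst hk0; rw [hc.1, h0]
          · by_cases hk1 : k = c1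
            · subst hk1; rw [hc.2, h1]
            · have : 1 < (k : ℕ) := by
                rw [Fin.ext_iff, hv0] at hk0
                rw [Fin.ext_iff, hv1] at hk1
                omega
              rw [hs k this, hsup k this]
        · rw [if_neg hs]
      · rw [if_neg hc]
  · intro t ht k hk
    by_contra hne
    exact ht (if_neg fun hall => hne (hall k hk))


lemma sum_eq_zero_forall (hpos : ∀ p q : K, p + q = 0 → p = 0 ∧ q = 0)
    {ι : Type*} (s : Finset ι) (f : ι → K) (h : ∑ i ∈ s, f i = 0) :
    ∀ i ∈ s, f i = 0 := by
  classical
  induction s using Finset.induction with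
  | empty => simp
  | insert _ _ hx ih =>
    rw [Finset.sum_insert hx] at h
    obtain ⟨h1, h2⟩ := hpos _ _ h
    intro i hi
    rcases Finset.mem_insert.mp hi with rfl | hi
    · exact h1
    · exact ih h2 i hi

lemma tp_fintype (htp : TransportationProperty K) {ι κ : Type*}
    [Fintype ι] [Fintype κ] [Nonempty ι] [Nonempty κ]
    (b : ι → K) (c : κ → K) (h : ∑ i, b i = ∑ j, c j) :
    ∃ d : ι → κ → K, (∀ i, ∑ j, d i j = b i) ∧ (∀ j, ∑ i, d i j = c j) := by
  classical
  let e := Fintype.equivFin ι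
  let f := Fintype.equivFin κ
  obtain ⟨d', hd1, hd2⟩ := htp (Fintype.card ι) (Fintype.card κ)
    Fintype.card_pos Fintype.card_pos (b ∘ e.symm) (c ∘ f.symm)
    (by
      rw [← Equiv.sum_comp e.symm b, ← Equiv.sum_comp f.symm c] at h
      exact h)
  refine ⟨fun i j => d' (e i) (f j), fun i => ?_, fun j => ?_⟩
  · rw [← Equiv.sum_comp f.symm (fun j => d' (e i) (f j))]
    simpa using hd1 (e i)
  · rw [← Equiv.sum_comp e.symm (fun i => d' (e i) (f j))]
    simpa using hd2 (f j)

lemma step_lemma (hpos : ∀ p q : K, p + q = 0 → p = 0 ∧ q = 0)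
    (htp : TransportationProperty K)
    {m : ℕ}
    (A : Fin (m + 1) → Type) [∀ k, Fintype (A k)] [∀ k, DecidableEq (A k)]
    [∀ k, Nonempty (A k)] (a : (k : Fin (m + 1)) → A k)
    (R : (i : Fin m) → A i.castSucc × A i.succ → K)
    (p : ℕ) (hpm : p + 1 < m)
    (W : ((k : Fin (m + 1)) → A k) → K)
    (hW : ∀ i : Fin m, (i : ℕ) < p + 1 → ∀ (x : A i.castSucc) (y : A i.succ),
      (∑ t : (k : Fin (m + 1)) → A k,
        if t i.castSucc = x ∧ t i.succ = y then W t else 0) = R i (x, y))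
    (hsupp : ∀ t, W t ≠ 0 → ∀ k : Fin (m + 1), p + 1 < (k : ℕ) → t k = a k)
    (hbal : ∀ y : A (⟨p + 1, hpm⟩ : Fin m).castSucc,
      (∑ t : (k : Fin (m + 1)) → A k,
        if t (⟨p + 1, hpm⟩ : Fin m).castSucc = y then W t else 0)
        = ∑ z, R ⟨p + 1, hpm⟩ (y, z)) :
    ∃ W' : ((k : Fin (m + 1)) → A k) → K,
      (∀ i : Fin m, (i : ℕ) < p + 1 + 1 → ∀ (x : A i.castSucc) (y : A i.succ),
        (∑ t : (k : Fin (m + 1)) → A k,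
          if t i.castSucc = x ∧ t i.succ = y then W' t else 0) = R i (x, y)) ∧
      (∀ t, W' t ≠ 0 → ∀ k : Fin (m + 1), p + 1 + 1 < (k : ℕ) → t k = a k) := by
  classical
  set icur : Fin m := ⟨p + 1, hpm⟩ with hicur
  set cr : Fin (m + 1) := icur.castSucc with hcr
  set cr1 : Fin (m + 1) := icur.succ with hcr1
  have hvr : (cr : ℕ) = p + 1 := rfl
  have hvr1 : (cr1 : ℕ) = p + 2 := rfl
  -- transportation for each section value
  choose d hrow hcol using fun y : A cr =>
    tp_fintype htp (fun t : (k : Fin (m + 1)) → A k => if t cr = y then W t else 0)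
      (fun z : A cr1 => R icur (y, z)) (hbal y)
  have hD1 : ∀ t : (k : Fin (m + 1)) → A k, ∑ z, d (t cr) t z = W t := by
    intro t
    have := hrow (t cr) t
    rwa [if_pos rfl] at this
  have hD0 : ∀ (t : (k : Fin (m + 1)) → A k) z, W t = 0 → d (t cr) t z = 0 := by
    intro t z h
    exact sum_eq_zero_forall hpos Finset.univ _ (by rw [hD1 t, h]) z (Finset.mem_univ z)
  have hdz : ∀ (y : A cr) (t : (k : Fin (m + 1)) → A k) z, t cr ≠ y → d y t z = 0 := by
    intro y t z h
    exact sum_eq_zero_forall hpos Finset.univ _ (by rw [hrow y t, if_neg h]) z (Finset.mem_univ z)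
  have hDcol : ∀ (y : A cr) (z : A cr1),
      (∑ t : (k : Fin (m + 1)) → A k, if t cr = y then d (t cr) t z else 0) = R icur (y, z) := by
    intro y z
    rw [← hcol y z]
    refine Finset.sum_congr rfl fun t _ => ?_
    by_cases h : t cr = y
    · rw [if_pos h]; subst h; rfl
    · rw [if_neg h, hdz y t z h]
  -- the gluing map
  set φ : ((k : Fin (m + 1)) → A k) → ((k : Fin (m + 1)) → A k) :=
    fun s k => if (k : ℕ) ≤ p + 1 then s k else a k with hφ
  have hφcr : ∀ s, φ s cr = s cr := fun s => if_pos (by omega)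
  have hφhigh : ∀ s (k : Fin (m + 1)), p + 1 < (k : ℕ) → φ s k = a k :=
    fun s k hk => if_neg (by omega)
  have hφlow : ∀ s (k : Fin (m + 1)), (k : ℕ) ≤ p + 1 → φ s k = s k :=
    fun s k hk => if_pos hk
  have hcrne : cr ≠ cr1 := by intro h; rw [Fin.ext_iff, hvr, hvr1] at h; omega
  refine ⟨fun s => if ∀ k : Fin (m + 1), p + 1 + 1 < (k : ℕ) → s k = a k
      then d (s cr) (φ s) (s cr1) else 0, ?_, ?_⟩
  swap
  · intro t ht k hk
    by_contra hne
    exact ht (if_neg fun hall => hne (hall k hk))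
  intro i hi x y
  by_cases hip : (i : ℕ) < p + 1
  · -- old marginal, preserved by summing out the new coordinate
    have hics : (i.castSucc : ℕ) = (i : ℕ) := Fin.coe_castSucc i
    have hisu : (i.succ : ℕ) = (i : ℕ) + 1 := Fin.val_succ i
    rw [← hW i hip x y]
    have hlhs : (∑ s : (k : Fin (m + 1)) → A k,
        if s i.castSucc = x ∧ s i.succ = y then
          (if ∀ k : Fin (m + 1), p + 1 + 1 < (k : ℕ) → s k = a k
            then d (s cr) (φ s) (s cr1) else 0) else 0)
        = ∑ s ∈ Finset.univ.filter (fun s : (k : Fin (m + 1)) → A k =>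
            (s i.castSucc = x ∧ s i.succ = y) ∧
            ∀ k : Fin (m + 1), p + 1 + 1 < (k : ℕ) → s k = a k),
            d (s cr) (φ s) (s cr1) := by
      rw [Finset.sum_filter]
      exact Finset.sum_congr rfl fun s _ => (ite_and _ _ _ _).symm
    have hrhs : (∑ t : (k : Fin (m + 1)) → A k,
        if t i.castSucc = x ∧ t i.succ = y then W t else 0)
        = ∑ tz ∈ (Finset.univ.filter (fun t : (k : Fin (m + 1)) → A k =>
            (t i.castSucc = x ∧ t i.succ = y) ∧
            ∀ k : Fin (m + 1), p + 1 < (k : ℕ) → t k = a k)) ×ˢ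
            (Finset.univ : Finset (A cr1)),
            d (tz.1 cr) tz.1 tz.2 := by
      rw [Finset.sum_product, Finset.sum_filter]
      dsimp only
      refine Finset.sum_congr rfl fun t _ => ?_
      by_cases h1 : t i.castSucc = x ∧ t i.succ = y
      · by_cases h2 : ∀ k : Fin (m + 1), p + 1 < (k : ℕ) → t k = a k
        · rw [if_pos h1, if_pos ⟨h1, h2⟩, hD1]
        · have hw0 : W t = 0 := by
            by_contra hw
            exact h2 (hsupp t hw)
          rw [if_pos h1, if_neg fun h => h2 h.2, hw0]
      · rw [if_neg h1, if_neg fun h => h1 h.1]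
    rw [hlhs, hrhs]
    refine Finset.sum_nbij' (fun s => (φ s, s cr1))
      (fun tz => Function.update tz.1 cr1 tz.2) ?_ ?_ ?_ ?_ ?_
    · intro s hs
      rw [Finset.mem_filter] at hs
      obtain ⟨-, ⟨hc, hhi⟩⟩ := hs
      rw [Finset.mem_product, Finset.mem_filter]
      refine ⟨⟨Finset.mem_univ _, ⟨?_, ?_⟩, fun k hk => hφhigh s k (by omega)⟩, Finset.mem_univ _⟩
      · exact (hφlow s i.castSucc (by omega)).trans hc.1
      · exact (hφlow s i.succ (by omega)).trans hc.2
    · intro tz htz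
      rw [Finset.mem_product, Finset.mem_filter] at htz
      obtain ⟨⟨-, ⟨hc, hhi⟩⟩, -⟩ := htz
      rw [Finset.mem_filter]
      have hne1 : i.castSucc ≠ cr1 := by
        intro h; rw [Fin.ext_iff, hics, hvr1] at h; omega
      have hne2 : i.succ ≠ cr1 := by
        intro h; rw [Fin.ext_iff, hisu, hvr1] at h; omega
      refine ⟨Finset.mem_univ _, ⟨?_, ?_⟩, fun k hk => ?_⟩
      · rw [Function.update_of_ne hne1]; exact hc.1
      · rw [Function.update_of_ne hne2]; exact hc.2
      · have hkne : k ≠ cr1 := by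
          intro h; rw [Fin.ext_iff, hvr1] at h; omega
        rw [Function.update_of_ne hkne]
        exact hhi k (by omega)
    · intro s hs
      dsimp only
      rw [Finset.mem_filter] at hs
      obtain ⟨-, ⟨-, hhi⟩⟩ := hs
      funext k
      by_cases hk : k = cr1
      · subst hk; rw [Function.update_self]
      · rw [Function.update_of_ne hk]
        by_cases hk2 : (k : ℕ) ≤ p + 1
        · exact hφlow s k hk2
        · rw [hφhigh s k (by omega)]
          have hkv : (k : ℕ) ≠ p + 2 := fun h => hk (Fin.ext (by rw [hvr1]; exact h))
          exact (hhi k (by omega)).symm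
    · intro tz htz
      rw [Finset.mem_product, Finset.mem_filter] at htz
      obtain ⟨⟨-, ⟨-, hhi⟩⟩, -⟩ := htz
      have : φ (Function.update tz.1 cr1 tz.2) = tz.1 := by
        funext k
        by_cases hk2 : (k : ℕ) ≤ p + 1
        · rw [hφlow _ k hk2, Function.update_of_ne (by
            intro h; rw [Fin.ext_iff, hvr1] at h; omega)]
        · rw [hφhigh _ k (by omega), hhi k (by omega)]
      rw [this, Function.update_self]
    · intro s hs
      show d (s cr) (φ s) (s cr1) = d (φ s cr) (φ s) (s cr1)
      rw [hφcr s]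
  · -- the new marginal
    have hii : i = icur := by
      have h0 : (icur : ℕ) = p + 1 := rfl
      exact Fin.ext (by omega)
    subst hii
    show (∑ s : (k : Fin (m + 1)) → A k,
        if s cr = x ∧ s cr1 = y then
          (if ∀ k : Fin (m + 1), p + 1 + 1 < (k : ℕ) → s k = a k
            then d (s cr) (φ s) (s cr1) else 0) else 0) = R icur (x, y)
    rw [← hDcol x y]
    have hlhs : (∑ s : (k : Fin (m + 1)) → A k,
        if s cr = x ∧ s cr1 = y then
          (if ∀ k : Fin (m + 1), p + 1 + 1 < (k : ℕ) → s k = a k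
            then d (s cr) (φ s) (s cr1) else 0) else 0)
        = ∑ s ∈ Finset.univ.filter (fun s : (k : Fin (m + 1)) → A k =>
            (s cr = x ∧ s cr1 = y) ∧
            ∀ k : Fin (m + 1), p + 1 + 1 < (k : ℕ) → s k = a k),
            d (s cr) (φ s) (s cr1) := by
      rw [Finset.sum_filter]
      exact Finset.sum_congr rfl fun s _ => (ite_and _ _ _ _).symm
    have hrhs : (∑ t : (k : Fin (m + 1)) → A k, if t cr = x then d (t cr) t y else 0)
        = ∑ t ∈ Finset.univ.filter (fun t : (k : Fin (m + 1)) → A k =>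
            t cr = x ∧ ∀ k : Fin (m + 1), p + 1 < (k : ℕ) → t k = a k),
            d (t cr) t y := by
      rw [Finset.sum_filter]
      refine Finset.sum_congr rfl fun t _ => ?_
      by_cases h1 : t cr = x
      · by_cases h2 : ∀ k : Fin (m + 1), p + 1 < (k : ℕ) → t k = a k
        · rw [if_pos h1, if_pos ⟨h1, h2⟩]
        · have hw0 : W t = 0 := by
            by_contra hw
            exact h2 (hsupp t hw)
          rw [if_pos h1, if_neg fun h => h2 h.2, hD0 t y hw0]
      · rw [if_neg h1, if_neg fun h => h1 h.1]
    rw [hlhs, hrhs]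
    refine Finset.sum_nbij' (fun s => φ s) (fun t => Function.update t cr1 y) ?_ ?_ ?_ ?_ ?_
    · intro s hs
      rw [Finset.mem_filter] at hs
      obtain ⟨-, ⟨hc, hhi⟩⟩ := hs
      rw [Finset.mem_filter]
      refine ⟨Finset.mem_univ _, ?_, fun k hk => hφhigh s k hk⟩
      rw [hφcr s]; exact hc.1
    · intro t ht
      rw [Finset.mem_filter] at ht
      obtain ⟨-, ⟨hc, hhi⟩⟩ := ht
      rw [Finset.mem_filter]
      refine ⟨Finset.mem_univ _, ⟨?_, Function.update_self _ _ _⟩, fun k hk => ?_⟩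
      · rw [Function.update_of_ne hcrne]; exact hc
      · have hkne : k ≠ cr1 := by
          intro h; rw [Fin.ext_iff, hvr1] at h; omega
        rw [Function.update_of_ne hkne]
        exact hhi k (by omega)
    · intro s hs
      rw [Finset.mem_filter] at hs
      obtain ⟨-, ⟨hc, hhi⟩⟩ := hs
      funext k
      by_cases hk : k = cr1
      · subst hk; rw [Function.update_self]; exact hc.2.symm
      · rw [Function.update_of_ne hk]
        by_cases hk2 : (k : ℕ) ≤ p + 1
        · exact hφlow s k hk2
        · rw [hφhigh s k (by omega)]
          have hkv : (k : ℕ) ≠ p + 2 := fun h => hk (Fin.ext (by rw [hvr1]; exact h))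
          exact (hhi k (by omega)).symm
    · intro t ht
      rw [Finset.mem_filter] at ht
      obtain ⟨-, ⟨-, hhi⟩⟩ := ht
      funext k
      by_cases hk2 : (k : ℕ) ≤ p + 1
      · rw [hφlow _ k hk2, Function.update_of_ne (by
          intro h; rw [Fin.ext_iff, hvr1] at h; omega)]
      · rw [hφhigh _ k (by omega), hhi k (by omega)]
    · intro s hs
      rw [Finset.mem_filter] at hs
      obtain ⟨-, ⟨hc, -⟩⟩ := hs
      show d (s cr) (φ s) (s cr1) = d (φ s cr) (φ s) y
      rw [hφcr s, hc.2]

end Aux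

/-- over a positive commutative monoid with the transportation
property, every pairwise consistent collection of `K`-relations on the path
schema `{A_0,A_1}, {A_1,A_2}, ..., {A_{m-1},A_m}` is globally consistent. -/
theorem path_localToGlobal (K : Type*) [AddCommMonoid K]
    (hpos : ∀ p q : K, p + q = 0 → p = 0 ∧ q = 0)
    (htp : TransportationProperty K)
    (m : ℕ) (hm : 1 ≤ m)
    (A : Fin (m + 1) → Type) [∀ k, Fintype (A k)] [∀ k, DecidableEq (A k)]
    [∀ k, Nonempty (A k)]
    (R : (i : Fin m) → A i.castSucc × A i.succ → K)
    (hpair : ∀ i j : Fin m, i < j →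
      ∃ W : ((k : Fin (m + 1)) → A k) → K,
        (∀ (x : A i.castSucc) (y : A i.succ),
          (∑ t : (k : Fin (m + 1)) → A k,
            if t i.castSucc = x ∧ t i.succ = y then W t else 0) = R i (x, y)) ∧
        (∀ (x : A j.castSucc) (y : A j.succ),
          (∑ t : (k : Fin (m + 1)) → A k,
            if t j.castSucc = x ∧ t j.succ = y then W t else 0) = R j (x, y))) :
    ∃ W : ((k : Fin (m + 1)) → A k) → K,
      ∀ (i : Fin m) (x : A i.castSucc) (y : A i.succ),
        (∑ t : (k : Fin (m + 1)) → A k,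
          if t i.castSucc = x ∧ t i.succ = y then W t else 0) = R i (x, y) := by
  classical
  have a : (k : Fin (m + 1)) → A k := fun k => Classical.arbitrary _
  suffices h : ∀ r : ℕ, 1 ≤ r → r ≤ m →
      ∃ W : ((k : Fin (m + 1)) → A k) → K,
        (∀ i : Fin m, (i : ℕ) < r → ∀ (x : A i.castSucc) (y : A i.succ),
          (∑ t : (k : Fin (m + 1)) → A k,
            if t i.castSucc = x ∧ t i.succ = y then W t else 0) = R i (x, y)) ∧
        (∀ t, W t ≠ 0 → ∀ k : Fin (m + 1), r < (k : ℕ) → t k = a k) by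
    obtain ⟨W, hW, -⟩ := h m hm le_rfl
    exact ⟨W, fun i => hW i i.isLt⟩
  intro r hr1
  induction r, hr1 using Nat.le_induction with
  | base => intro _; exact base_lemma hm A a R
  | succ r hr ih =>
    intro hrm
    obtain ⟨W, hW, hsupp⟩ := ih (by omega)
    obtain ⟨p, rfl⟩ : ∃ p, r = p + 1 := ⟨r - 1, by omega⟩
    have hpm : p + 1 < m := by omega
    have hppm : p < m := by omega
    have hbal : ∀ y : A (⟨p + 1, hpm⟩ : Fin m).castSucc,
        (∑ t : (k : Fin (m + 1)) → A k,
          if t (⟨p + 1, hpm⟩ : Fin m).castSucc = y then W t else 0)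
          = ∑ z, R ⟨p + 1, hpm⟩ (y, z) := by
      intro y
      obtain ⟨W2, h2a, h2b⟩ := hpair ⟨p, hppm⟩ ⟨p + 1, hpm⟩ (by rw [Fin.mk_lt_mk]; omega)
      have e1 : (∑ t : (k : Fin (m + 1)) → A k,
          if t (⟨p + 1, hpm⟩ : Fin m).castSucc = y then W t else 0)
          = ∑ x : A (⟨p, hppm⟩ : Fin m).castSucc, R ⟨p, hppm⟩ (x, y) := by
        rw [← sum_collapse_left (K := K) (fun t => W t)
          (fun t : (k : Fin (m + 1)) → A k => t (⟨p + 1, hpm⟩ : Fin m).castSucc = y)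
          (fun t => t (⟨p, hppm⟩ : Fin m).castSucc)]
        exact Finset.sum_congr rfl fun x _ => hW ⟨p, hppm⟩ (Nat.lt_succ_self p) x y
      have e2 : (∑ x : A (⟨p, hppm⟩ : Fin m).castSucc, R ⟨p, hppm⟩ (x, y))
          = ∑ t : (k : Fin (m + 1)) → A k,
            if t (⟨p + 1, hpm⟩ : Fin m).castSucc = y then W2 t else 0 := by
        rw [← sum_collapse_left (K := K) (fun t => W2 t)
          (fun t : (k : Fin (m + 1)) → A k => t (⟨p + 1, hpm⟩ : Fin m).castSucc = y)
          (fun t => t (⟨p, hppm⟩ : Fin m).castSucc)]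
        exact (Finset.sum_congr rfl fun x _ => h2a x y).symm
      have e3 : (∑ t : (k : Fin (m + 1)) → A k,
          if t (⟨p + 1, hpm⟩ : Fin m).castSucc = y then W2 t else 0)
          = ∑ z, R ⟨p + 1, hpm⟩ (y, z) := by
        rw [← sum_collapse_right (K := K) (fun t => W2 t)
          (fun t : (k : Fin (m + 1)) → A k => t (⟨p + 1, hpm⟩ : Fin m).castSucc = y)
          (fun t => t (⟨p + 1, hpm⟩ : Fin m).succ)]
        exact Finset.sum_congr rfl fun z _ => h2b y z
      exact e1.trans (e2.trans e3)
    exact step_lemma hpos htp A a R p hpm W hW hsupp hbal
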